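/- arXiv:2404.06995 — 3 statements merged into one kernel-verified Lean document; each statement's English description precedes it below -/
import Mathlib

section
/- Let P_X and P_Y be probability measures on a measurable space (E, ℰ) and g : E → ℝ a measurable function such that g(Z) has a continuous (atomless) distribution with cumulative distribution function F_X when Z ~ P_X and F_Y when Z ~ P_Y. Set μ* := P( g(Z_X) < g(Z_Y) ) for independent Z_X ~ P_X, Z_Y ~ P_Y. Define the kernels h⁰(z, z') := 1{ g(z) < g(z') } − F_X(g(z')) + F_X(g(z)) − 1/2 and h†(z, z') := 1{ g(z) < g(z') } − F_X(g(z')) + F_Y(g(z)) − 1 + μ*. Let Z_i, Z_j be independent with law P_X and Z_{j'} with law P_Y, all three mutually independent. Then E[ h⁰(Z_i, Z_j) · h†(Z_i, Z_{j'}) ] = 0. -/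
open MeasureTheory ProbabilityTheory

/-- with `g(Z)` atomless under `P_X` (CDF `F_X`) and under `P_Y`
(CDF `F_Y`), `μ* := P(g(Z_X) < g(Z_Y))`, and kernels
`h⁰(z,z') := 1{g z < g z'} − F_X(g z') + F_X(g z) − 1/2` and
`h†(z,z') := 1{g z < g z'} − F_X(g z') + F_Y(g z) − 1 + μ*`: for mutually
independent `Z_i, Z_j ~ P_X` and `Z_{j'} ~ P_Y`,
`E[h⁰(Z_i, Z_j)·h†(Z_i, Z_{j'})] = 0`. -/
theorem statement11 {E Ω : Type*} [MeasurableSpace E] [MeasureSpace Ω]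
    [IsProbabilityMeasure (ℙ : Measure Ω)]
    (PX PY : Measure E) [IsProbabilityMeasure PX] [IsProbabilityMeasure PY]
    (g : E → ℝ) (hg : Measurable g)
    (hatomlessX : ∀ c : ℝ, PX {z | g z = c} = 0)
    (hatomlessY : ∀ c : ℝ, PY {z | g z = c} = 0)
    (FX FY : ℝ → ℝ)
    (hFX : FX = fun t => (PX {z | g z ≤ t}).toReal)
    (hFY : FY = fun t => (PY {z | g z ≤ t}).toReal)
    (μs : ℝ) (hμs : μs = ((PX.prod PY) {p | g p.1 < g p.2}).toReal)
    (h0 : E → E → ℝ)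
    (hh0 : h0 = fun z z' =>
      (if g z < g z' then (1 : ℝ) else 0) - FX (g z') + FX (g z) - 1 / 2)
    (hdag : E → E → ℝ)
    (hhdag : hdag = fun z z' =>
      (if g z < g z' then (1 : ℝ) else 0) - FX (g z') + FY (g z) - 1 + μs)
    (Zi Zj Zj' : Ω → E)
    (hZi : Measurable Zi) (hZj : Measurable Zj) (hZj' : Measurable Zj')
    (hindep : iIndepFun (m := fun _ => ‹MeasurableSpace E›) ![Zi, Zj, Zj'] ℙ)
    (hlawZi : Measure.map Zi ℙ = PX) (hlawZj : Measure.map Zj ℙ = PX)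
    (hlawZj' : Measure.map Zj' ℙ = PY) :
    (∫ ω, h0 (Zi ω) (Zj ω) * hdag (Zi ω) (Zj' ω)) = 0 := by
  -- basic facts about `FX`, `FY`, `μs`
  have hFX01 : ∀ t, 0 ≤ FX t ∧ FX t ≤ 1 := by
    intro t
    rw [hFX]
    refine ⟨ENNReal.toReal_nonneg, ?_⟩
    have h := prob_le_one (μ := PX) (s := {z | g z ≤ t})
    calc (PX {z | g z ≤ t}).toReal ≤ (1 : ENNReal).toReal :=
          ENNReal.toReal_mono ENNReal.one_ne_top h
      _ = 1 := by simp
  have hFY01 : ∀ t, 0 ≤ FY t ∧ FY t ≤ 1 := by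
    intro t
    rw [hFY]
    refine ⟨ENNReal.toReal_nonneg, ?_⟩
    have h := prob_le_one (μ := PY) (s := {z | g z ≤ t})
    calc (PY {z | g z ≤ t}).toReal ≤ (1 : ENNReal).toReal :=
          ENNReal.toReal_mono ENNReal.one_ne_top h
      _ = 1 := by simp
  have hμs01 : 0 ≤ μs ∧ μs ≤ 1 := by
    rw [hμs]
    refine ⟨ENNReal.toReal_nonneg, ?_⟩
    have h := prob_le_one (μ := PX.prod PY) (s := {p | g p.1 < g p.2})
    calc ((PX.prod PY) {p | g p.1 < g p.2}).toReal ≤ (1 : ENNReal).toReal :=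
          ENNReal.toReal_mono ENNReal.one_ne_top h
      _ = 1 := by simp
  -- `FX` is measurable (it is monotone)
  have hFXmono : Monotone FX := by
    intro s t hst
    rw [hFX]
    exact ENNReal.toReal_mono (measure_ne_top _ _)
      (measure_mono fun z hz => le_trans hz hst)
  have hFXmeas : Measurable FX := hFXmono.measurable
  have hFYmono : Monotone FY := by
    intro s t hst
    rw [hFY]
    exact ENNReal.toReal_mono (measure_ne_top _ _)
      (measure_mono fun z hz => le_trans hz hst)
  have hFYmeas : Measurable FY := hFYmono.measurable
  -- measurability of the kernels
  have hsL : MeasurableSet {p : E × E | g p.1 < g p.2} :=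
    measurableSet_lt (hg.comp measurable_fst) (hg.comp measurable_snd)
  have h0m : Measurable (fun p : E × E => h0 p.1 p.2) := by
    rw [hh0]
    exact ((((Measurable.ite hsL measurable_const measurable_const).sub
      (hFXmeas.comp (hg.comp measurable_snd))).add
      (hFXmeas.comp (hg.comp measurable_fst))).sub measurable_const)
  have hdagm : Measurable (fun p : E × E => hdag p.1 p.2) := by
    rw [hhdag]
    exact (((((Measurable.ite hsL measurable_const measurable_const).sub
      (hFXmeas.comp (hg.comp measurable_snd))).add
      (hFYmeas.comp (hg.comp measurable_fst))).sub measurable_const).add measurable_const)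
  -- bounds on the kernels
  have hbound0 : ∀ a b, |h0 a b| ≤ 4 := by
    intro a b
    have h1 := hFX01 (g a); have h2 := hFX01 (g b)
    rw [hh0, abs_le]
    constructor <;> simp only <;> split_ifs <;> linarith [h1.1, h1.2, h2.1, h2.2]
  have hbounddag : ∀ a b, |hdag a b| ≤ 5 := by
    intro a b
    have h1 := hFY01 (g a); have h2 := hFX01 (g b)
    rw [hhdag, abs_le]
    constructor <;> simp only <;> split_ifs <;>
      linarith [h1.1, h1.2, h2.1, h2.2, hμs01.1, hμs01.2]
  -- key: the integral of `FX ∘ g` against `PX` is `1/2`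
  have hs2 : MeasurableSet {p : E × E | g p.2 ≤ g p.1} :=
    measurableSet_le (hg.comp measurable_snd) (hg.comp measurable_fst)
  have hswap : (PX.prod PX) {p : E × E | g p.1 < g p.2}
      = (PX.prod PX) {p : E × E | g p.2 < g p.1} := by
    conv_lhs => rw [← Measure.prod_swap (μ := PX) (ν := PX)]
    rw [Measure.map_apply measurable_swap hsL]
    congr 1
  have hdiag : (PX.prod PX) {p : E × E | g p.2 = g p.1} = 0 := by
    have hsD : MeasurableSet {p : E × E | g p.2 = g p.1} :=
      measurableSet_eq_fun (hg.comp measurable_snd) (hg.comp measurable_fst)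
    rw [Measure.prod_apply hsD]
    have h : ∀ b : E, PX (Prod.mk b ⁻¹' {p : E × E | g p.2 = g p.1}) = 0 := by
      intro b
      have : (Prod.mk b ⁻¹' {p : E × E | g p.2 = g p.1}) = {z : E | g z = g b} := by
        ext z; simp [Set.preimage, Set.mem_setOf_eq]
      rw [this]
      exact hatomlessX (g b)
    simp only [h, lintegral_zero]
  have hGeqL : (PX.prod PX) {p : E × E | g p.2 ≤ g p.1}
      = (PX.prod PX) {p : E × E | g p.2 < g p.1} := by
    apply le_antisymm
    · calc (PX.prod PX) {p : E × E | g p.2 ≤ g p.1}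
          ≤ (PX.prod PX) ({p : E × E | g p.2 < g p.1} ∪ {p : E × E | g p.2 = g p.1}) := by
            apply measure_mono
            intro p hp
            simp only [Set.mem_setOf_eq] at hp ⊢
            rcases lt_or_eq_of_le hp with h | h
            · exact Or.inl h
            · exact Or.inr h
        _ ≤ (PX.prod PX) {p : E × E | g p.2 < g p.1}
            + (PX.prod PX) {p : E × E | g p.2 = g p.1} := measure_union_le _ _
        _ = (PX.prod PX) {p : E × E | g p.2 < g p.1} := by rw [hdiag, add_zero]
    · apply measure_mono
      intro p hp
      simp only [Set.mem_setOf_eq] at hp ⊢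
      exact le_of_lt hp
  have hcompl : {p : E × E | g p.2 ≤ g p.1} = {p : E × E | g p.1 < g p.2}ᶜ := by
    ext p; simp [not_lt]
  have hval : ((PX.prod PX) {p : E × E | g p.2 ≤ g p.1}).toReal = 1 / 2 := by
    have h1 : ((PX.prod PX) {p : E × E | g p.2 ≤ g p.1}).toReal
        = 1 - ((PX.prod PX) {p : E × E | g p.1 < g p.2}).toReal := by
      rw [hcompl, prob_compl_eq_one_sub hsL,
        ENNReal.toReal_sub_of_le prob_le_one ENNReal.one_ne_top]
      simp
    have h2 : ((PX.prod PX) {p : E × E | g p.2 ≤ g p.1}).toReal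
        = ((PX.prod PX) {p : E × E | g p.1 < g p.2}).toReal := by
      rw [hGeqL, hswap]
    linarith
  have hBint : Integrable (fun b => FX (g b)) PX := by
    refine Integrable.mono' (integrable_const (1 : ℝ))
      ((hFXmeas.comp hg).aestronglyMeasurable) ?_
    filter_upwards with b
    rw [Real.norm_eq_abs, abs_of_nonneg (hFX01 (g b)).1]
    exact (hFX01 (g b)).2
  have hB : ∫ b, FX (g b) ∂PX = 1 / 2 := by
    have hslice : ∀ b : E, Prod.mk b ⁻¹' {p : E × E | g p.2 ≤ g p.1} = {z : E | g z ≤ g b} := by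
      intro b; ext z; simp [Set.preimage, Set.mem_setOf_eq]
    have heq : (fun b => FX (g b))
        = fun b => (PX (Prod.mk b ⁻¹' {p : E × E | g p.2 ≤ g p.1})).toReal := by
      funext b; rw [hFX, hslice b]
    rw [heq]
    rw [integral_toReal (measurable_measure_prodMk_left hs2).aemeasurable ?_]
    · rw [← Measure.prod_apply hs2, hval]
    · filter_upwards with b
      exact lt_of_le_of_lt prob_le_one (by simp)
  -- key: the tail probability
  have hind : ∀ a : E, ∫ b, (if g a < g b then (1 : ℝ) else 0) ∂PX = 1 - FX (g a) := by
    intro a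
    have hS : MeasurableSet {b : E | g a < g b} := hg measurableSet_Ioi
    have heq : (fun b => if g a < g b then (1 : ℝ) else 0)
        = Set.indicator {b : E | g a < g b} (fun _ => (1 : ℝ)) := by
      funext b; rw [Set.indicator_apply]; rfl
    rw [heq, integral_indicator_const (1 : ℝ) hS, smul_eq_mul, mul_one]
    have hc : {b : E | g a < g b} = {b : E | g b ≤ g a}ᶜ := by ext b; simp [not_le]
    have hSc : MeasurableSet {b : E | g b ≤ g a} := hg measurableSet_Iic
    rw [hc, measureReal_def, prob_compl_eq_one_sub hSc,
      ENNReal.toReal_sub_of_le prob_le_one ENNReal.one_ne_top, hFX]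
    simp
  have hIint : ∀ a : E, Integrable (fun b => if g a < g b then (1 : ℝ) else 0) PX := by
    intro a
    have hS : MeasurableSet {b : E | g a < g b} := hg measurableSet_Ioi
    have heq : (fun b => if g a < g b then (1 : ℝ) else 0)
        = Set.indicator {b : E | g a < g b} (fun _ => (1 : ℝ)) := by
      funext b; rw [Set.indicator_apply]; rfl
    rw [heq]
    exact (integrable_const (1 : ℝ)).indicator hS
  -- Lemma A : `∫ h0 a b dPX(b) = 0` for every `a`
  have hA : ∀ a : E, ∫ b, h0 a b ∂PX = 0 := by
    intro a
    have e1 : (fun b => h0 a b)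
        = fun b => ((if g a < g b then (1 : ℝ) else 0) - FX (g b)) + (FX (g a) - 1 / 2) := by
      rw [hh0]; funext b; ring
    have h1 : Integrable (fun b => (if g a < g b then (1 : ℝ) else 0) - FX (g b)) PX :=
      (hIint a).sub hBint
    have h2 : ∫ b, ((if g a < g b then (1 : ℝ) else 0) - FX (g b)) ∂PX
        = (1 - FX (g a)) - 1 / 2 := by
      rw [integral_sub (hIint a) hBint, hind a, hB]
    rw [e1, integral_add h1 (integrable_const _), h2, integral_const]
    simp only [measureReal_def, measure_univ, ENNReal.toReal_one, smul_eq_mul, one_mul]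
    ring
  -- independence: the pair `(Zi, Zj')` is independent of `Zj`
  have hpairm : Measurable fun ω => (Zi ω, Zj' ω) := hZi.prodMk hZj'
  have hmeas3 : ∀ i, Measurable (![Zi, Zj, Zj'] i) := by
    intro i; fin_cases i <;> simpa using ‹_›
  have hindep2 : IndepFun (fun ω => (Zi ω, Zj' ω)) Zj ℙ := by
    have h := hindep.indepFun_prodMk hmeas3 0 2 1 (by decide) (by decide)
    simpa using h
  set μ12 := Measure.map (fun ω => (Zi ω, Zj' ω)) ℙ with hμ12
  have hprob12 : IsProbabilityMeasure μ12 := Measure.isProbabilityMeasure_map hpairm.aemeasurable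
  have hmapeq : Measure.map (fun ω => ((Zi ω, Zj' ω), Zj ω)) ℙ = μ12.prod PX := by
    rw [hμ12, ← hlawZj]
    exact (indepFun_iff_map_prod_eq_prod_map_map hpairm.aemeasurable hZj.aemeasurable).mp hindep2
  -- the integrand as a function on `(E × E) × E`
  set Φ : (E × E) × E → ℝ := fun p => h0 p.1.1 p.2 * hdag p.1.1 p.1.2 with hΦ
  have hΦm : Measurable Φ := by
    apply Measurable.mul
    · exact h0m.comp ((measurable_fst.fst).prodMk measurable_snd)
    · exact hdagm.comp measurable_fst
  have hΦint : Integrable Φ (μ12.prod PX) := by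
    refine Integrable.mono' (integrable_const (20 : ℝ)) hΦm.aestronglyMeasurable ?_
    filter_upwards with p
    rw [hΦ, Real.norm_eq_abs, abs_mul]
    calc |h0 p.1.1 p.2| * |hdag p.1.1 p.1.2| ≤ 4 * 5 := by
          apply mul_le_mul (hbound0 _ _) (hbounddag _ _) (abs_nonneg _) (by norm_num)
      _ = 20 := by norm_num
  have htriplem : Measurable fun ω => ((Zi ω, Zj' ω), Zj ω) := hpairm.prodMk hZj
  calc (∫ ω, h0 (Zi ω) (Zj ω) * hdag (Zi ω) (Zj' ω))
      = ∫ ω, Φ ((Zi ω, Zj' ω), Zj ω) := by rfl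
    _ = ∫ p, Φ p ∂(Measure.map (fun ω => ((Zi ω, Zj' ω), Zj ω)) ℙ) :=
        (integral_map htriplem.aemeasurable hΦm.aestronglyMeasurable).symm
    _ = ∫ p, Φ p ∂(μ12.prod PX) := by rw [hmapeq]
    _ = ∫ x, ∫ y, Φ (x, y) ∂PX ∂μ12 := integral_prod Φ hΦint
    _ = 0 := by
        have : ∀ x : E × E, ∫ y, Φ (x, y) ∂PX = 0 := by
          intro x
          have : (fun y => Φ (x, y)) = fun y => h0 x.1 y * hdag x.1 x.2 := rfl
          rw [this, integral_mul_const, hA x.1, zero_mul]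
        simp only [this, integral_zero]
end

section
/- Let P be a probability measure on a measurable space (E, ℰ) and g : E → ℝ a measurable function such that g(Z) has a continuous (atomless) distribution with cumulative distribution function F when Z ~ P, and define h⁰(z, z') := 1{ g(z) < g(z') } − F(g(z')) + F(g(z)) − 1/2. Let Z_1, …, Z_n be independent and each distributed according to P, and let A and B be disjoint subsets of {1, …, n}. Then E[ ( Σ_{i ∈ A} Σ_{j ∈ B} h⁰(Z_i, Z_j) )² ] = Σ_{i ∈ A} Σ_{j ∈ B} E[ h⁰(Z_i, Z_j)² ], and in particular this second moment is at most 16·|A|·|B|. -/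
open MeasureTheory ProbabilityTheory

open scoped ENNReal

lemma half_lintegral (μ : Measure ℝ) [IsProbabilityMeasure μ] (hμ : ∀ c : ℝ, μ {c} = 0) :
    ∫⁻ x, μ (Set.Iic x) ∂μ = 1/2 := by
  have hle : MeasurableSet {p : ℝ × ℝ | p.2 ≤ p.1} := measurableSet_le measurable_snd measurable_fst
  have hlt' : MeasurableSet {p : ℝ × ℝ | p.1 < p.2} := measurableSet_lt measurable_fst measurable_snd
  have heq : MeasurableSet {p : ℝ × ℝ | p.2 = p.1} := measurableSet_eq_fun measurable_snd measurable_fst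
  have h1 : ∫⁻ x, μ (Set.Iic x) ∂μ = (μ.prod μ) {p : ℝ × ℝ | p.2 ≤ p.1} := by
    rw [Measure.prod_apply hle]; rfl
  have hdiag : (μ.prod μ) {p : ℝ × ℝ | p.2 = p.1} = 0 := by
    rw [Measure.prod_apply heq]
    have h2 : ∀ x : ℝ, μ (Prod.mk x ⁻¹' {p : ℝ × ℝ | p.2 = p.1}) = 0 := by
      intro x
      have : (Prod.mk x ⁻¹' {p : ℝ × ℝ | p.2 = p.1}) = {y : ℝ | y = x} := by
        ext y; simp
      rw [this]
      simpa [Set.setOf_eq_eq_singleton] using hμ x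
    simp [h2, hμ]
  have hswap : (μ.prod μ) {p : ℝ × ℝ | p.1 < p.2} = (μ.prod μ) {p : ℝ × ℝ | p.2 < p.1} := by
    conv_lhs => rw [← Measure.prod_swap]
    rw [Measure.map_apply measurable_swap hlt']
    rfl
  have hsplit : (μ.prod μ) {p : ℝ × ℝ | p.2 ≤ p.1}
      = (μ.prod μ) {p : ℝ × ℝ | p.2 < p.1} := by
    have hU : {p : ℝ × ℝ | p.2 ≤ p.1} = {p : ℝ × ℝ | p.2 < p.1} ∪ {p : ℝ × ℝ | p.2 = p.1} := by
      ext p; simp [le_iff_lt_or_eq]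
    rw [hU]
    refine le_antisymm ((measure_union_le _ _).trans (by rw [hdiag, add_zero])) (measure_mono Set.subset_union_left)
  have hdisj : Disjoint {p : ℝ × ℝ | p.2 ≤ p.1} {p : ℝ × ℝ | p.1 < p.2} := by
    rw [Set.disjoint_left]; intro p hp hp'
    simp only [Set.mem_setOf_eq] at hp hp'
    exact absurd hp' (not_lt.mpr hp)
  have hU : {p : ℝ × ℝ | p.2 ≤ p.1} ∪ {p : ℝ × ℝ | p.1 < p.2} = Set.univ := by
    ext p; simpa using le_or_gt p.2 p.1
  have htot : (μ.prod μ) {p : ℝ × ℝ | p.2 ≤ p.1} + (μ.prod μ) {p : ℝ × ℝ | p.1 < p.2} = 1 := by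
    rw [← measure_union hdisj hlt', hU, measure_univ]
  rw [hswap, ← hsplit] at htot
  rw [h1]
  have hne : (μ.prod μ) {p : ℝ × ℝ | p.2 ≤ p.1} ≠ ⊤ := measure_ne_top _ _
  have h2 : 2 * (μ.prod μ) {p : ℝ × ℝ | p.2 ≤ p.1} = 1 := by rw [two_mul]; exact htot
  rw [ENNReal.eq_div_iff (by norm_num) (by norm_num)]
  rw [mul_comm] at h2 ⊢
  exact h2

lemma integrable_of_bdd {α : Type*} [MeasurableSpace α] {μ : Measure α} [IsFiniteMeasure μ]
    {f : α → ℝ} (hf : Measurable f) (C : ℝ) (h : ∀ x, |f x| ≤ C) : Integrable f μ :=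
  ⟨hf.aestronglyMeasurable,
    HasFiniteIntegral.of_bounded (C := C) (ae_of_all _ (by simpa [Real.norm_eq_abs] using h))⟩

lemma int_cdf_half {E : Type*} [MeasurableSpace E] (P : Measure E) [IsProbabilityMeasure P]
    (g : E → ℝ) (hg : Measurable g) (hatomless : ∀ c : ℝ, P {z | g z = c} = 0)
    (F : ℝ → ℝ) (hF : F = fun t => (P {z | g z ≤ t}).toReal)
    (hl : ∫⁻ x, (P.map g) (Set.Iic x) ∂(P.map g) = 1/2) :
    ∫ z, F (g z) ∂P = 1/2 := by
  set μ := P.map g with hμdef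
  have hprob : IsProbabilityMeasure μ := Measure.isProbabilityMeasure_map hg.aemeasurable
  have hFt : ∀ t, F t = (μ (Set.Iic t)).toReal := by
    intro t
    rw [hF, hμdef, Measure.map_apply hg measurableSet_Iic]
    rfl
  have hmono : Monotone fun t => μ (Set.Iic t) :=
    fun a b hab => measure_mono (Set.Iic_subset_Iic.mpr hab)
  have hmeas : Measurable fun t => μ (Set.Iic t) := hmono.measurable
  have hFmeas : Measurable F := by
    have : Monotone F := by
      intro a b hab
      rw [hFt a, hFt b]
      exact ENNReal.toReal_mono (measure_ne_top _ _) (hmono hab)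
    exact this.measurable
  have h1 : ∫ z, F (g z) ∂P = ∫ t, F t ∂μ :=
    (integral_map hg.aemeasurable hFmeas.aestronglyMeasurable).symm
  rw [h1]
  have h2 : ∫ t, F t ∂μ = (∫⁻ t, μ (Set.Iic t) ∂μ).toReal := by
    rw [← integral_toReal hmeas.aemeasurable (ae_of_all _ fun t => measure_lt_top _ _)]
    exact integral_congr_ae (ae_of_all _ hFt)
  rw [h2, hl]
  simp [ENNReal.toReal_div]
open scoped ENNReal


section kernel
variable {E : Type*} [MeasurableSpace E] (P : Measure E) [IsProbabilityMeasure P]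
  (g : E → ℝ) (hg : Measurable g)
  (F : ℝ → ℝ) (hF : F = fun t => (P {z | g z ≤ t}).toReal)
  (h0 : E → E → ℝ)
  (hh0 : h0 = fun z z' => (if g z < g z' then (1:ℝ) else 0) - F (g z') + F (g z) - 1/2)

include hF in
lemma F_bounds : ∀ t, 0 ≤ F t ∧ F t ≤ 1 := by
  intro t
  rw [hF]
  refine ⟨ENNReal.toReal_nonneg, ?_⟩
  have h1 : P {z | g z ≤ t} ≤ 1 := prob_le_one
  calc (P {z | g z ≤ t}).toReal ≤ (1 : ℝ≥0∞).toReal :=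
        ENNReal.toReal_mono (by norm_num) h1
    _ = 1 := by simp

include hg hF in
lemma F_meas : Measurable F := by
  have hmono : Monotone F := by
    intro a b hab
    rw [hF]
    exact ENNReal.toReal_mono (measure_ne_top _ _)
      (measure_mono fun z hz => le_trans hz hab)
  exact hmono.measurable

include hg hF hh0 in
lemma k_meas : Measurable (fun p : E × E => h0 p.1 p.2) := by
  rw [hh0]
  have hs : MeasurableSet {p : E × E | g p.1 < g p.2} :=
    measurableSet_lt (hg.comp measurable_fst) (hg.comp measurable_snd)
  have h1 : Measurable fun p : E × E => (if g p.1 < g p.2 then (1:ℝ) else 0) :=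
    Measurable.ite hs measurable_const measurable_const
  exact (((h1.sub (((F_meas P g hg F hF)).comp (hg.comp measurable_snd))).add
    ((F_meas P g hg F hF).comp (hg.comp measurable_fst))).sub measurable_const)

include hF hh0 in
lemma k_abs : ∀ z z', |h0 z z'| ≤ 4 := by
  intro z z'
  have h1 := F_bounds P g F hF (g z')
  have h2 := F_bounds P g F hF (g z)
  rw [hh0]
  simp only
  split_ifs with h
  · rw [abs_le]; constructor <;> linarith [h1.1, h1.2, h2.1, h2.2]
  · rw [abs_le]; constructor <;> linarith [h1.1, h1.2, h2.1, h2.2]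

include hg hF hh0 in
lemma int_right (hatomless : ∀ c : ℝ, P {z | g z = c} = 0)
    (hhalf : ∫ z, F (g z) ∂P = 1/2) (z : E) : ∫ z', h0 z z' ∂P = 0 := by
  have hFm := F_meas P g hg F hF
  have hFb := F_bounds P g F hF
  have hs : MeasurableSet {z' | g z < g z'} := measurableSet_lt measurable_const hg
  have hind : (fun z' => if g z < g z' then (1:ℝ) else 0)
      = Set.indicator {z' | g z < g z'} (fun _ => (1:ℝ)) := by
    ext z'; simp [Set.indicator_apply]
  have I1 : Integrable (fun z' => if g z < g z' then (1:ℝ) else 0) P := by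
    refine integrable_of_bdd (Measurable.ite hs measurable_const measurable_const) 1 ?_
    intro x; split_ifs <;> simp
  have I2 : Integrable (fun z' => F (g z')) P := by
    refine integrable_of_bdd (hFm.comp hg) 1 ?_
    intro x; rw [abs_le]; exact ⟨by linarith [(hFb (g x)).1], (hFb (g x)).2⟩
  have hint1 : ∫ z', (if g z < g z' then (1:ℝ) else 0) ∂P = 1 - F (g z) := by
    rw [hind, integral_indicator_const (1:ℝ) hs, measureReal_def]
    have hcompl : {z' | g z < g z'} = {z' | g z' ≤ g z}ᶜ := by
      ext z'; simp [not_le]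
    have hmeas2 : MeasurableSet {z' | g z' ≤ g z} := measurableSet_le hg measurable_const
    rw [hcompl, measure_compl hmeas2 (measure_ne_top _ _), measure_univ]
    rw [ENNReal.toReal_sub_of_le prob_le_one (by norm_num)]
    rw [hF]; simp
  rw [hh0]
  simp only
  have hrw : ∀ w, (if g z < g w then (1:ℝ) else 0) - F (g w) + F (g z) - 1/2
      = ((if g z < g w then (1:ℝ) else 0) - F (g w)) + (F (g z) - 1/2) := by
    intro w; ring
  simp_rw [hrw]
  have I12 : Integrable (fun w => (if g z < g w then (1:ℝ) else 0) - F (g w)) P := I1.sub I2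
  rw [integral_add I12 (integrable_const _), integral_sub I1 I2,
      hint1, hhalf, integral_const]
  simp
  ring

include hg hF hh0 in
lemma int_left (hatomless : ∀ c : ℝ, P {z | g z = c} = 0)
    (hhalf : ∫ z, F (g z) ∂P = 1/2) (z' : E) : ∫ z, h0 z z' ∂P = 0 := by
  have hFm := F_meas P g hg F hF
  have hFb := F_bounds P g F hF
  have hs : MeasurableSet {z | g z < g z'} := measurableSet_lt hg measurable_const
  have hind : (fun z => if g z < g z' then (1:ℝ) else 0)
      = Set.indicator {z | g z < g z'} (fun _ => (1:ℝ)) := by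
    ext z; simp [Set.indicator_apply]
  have I1 : Integrable (fun z => if g z < g z' then (1:ℝ) else 0) P := by
    refine integrable_of_bdd (Measurable.ite hs measurable_const measurable_const) 1 ?_
    intro x; split_ifs <;> simp
  have I2 : Integrable (fun z => F (g z)) P := by
    refine integrable_of_bdd (hFm.comp hg) 1 ?_
    intro x; rw [abs_le]; exact ⟨by linarith [(hFb (g x)).1], (hFb (g x)).2⟩
  have hPlt : P {z | g z < g z'} = P {z | g z ≤ g z'} := by
    refine le_antisymm (measure_mono fun z (hz : g z < g z') => (le_of_lt hz : g z ≤ g z')) ?_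
    have hsub : {z | g z ≤ g z'} ⊆ {z | g z < g z'} ∪ {z | g z = g z'} := by
      intro z hz
      have h : g z ≤ g z' := hz
      rcases h.lt_or_eq with h1 | h1
      · exact Or.inl h1
      · exact Or.inr h1
    calc P {z | g z ≤ g z'} ≤ P ({z | g z < g z'} ∪ {z | g z = g z'}) := measure_mono hsub
      _ ≤ P {z | g z < g z'} + P {z | g z = g z'} := measure_union_le _ _
      _ = P {z | g z < g z'} := by rw [hatomless (g z'), add_zero]
  have hint1 : ∫ z, (if g z < g z' then (1:ℝ) else 0) ∂P = F (g z') := by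
    rw [hind, integral_indicator_const (1:ℝ) hs, measureReal_def, hPlt, hF]
    simp
  rw [hh0]
  simp only
  have hrw : ∀ w, (if g w < g z' then (1:ℝ) else 0) - F (g z') + F (g w) - 1/2
      = ((if g w < g z' then (1:ℝ) else 0) + (- F (g z') - 1/2)) + F (g w) := by
    intro w; ring
  simp_rw [hrw]
  have I1c : Integrable (fun w => (if g w < g z' then (1:ℝ) else 0) + (- F (g z') - 1/2)) P :=
    I1.add (integrable_const _)
  rw [integral_add I1c I2, integral_add I1 (integrable_const _),
      hint1, hhalf, integral_const]
  simp
  ring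

end kernel

/-- with `g(Z)` atomless under `P` with CDF `F`, kernel
`h⁰(z,z') := 1{g z < g z'} − F(g z') + F(g z) − 1/2`, i.i.d. `Z_1, …, Z_n ~ P`,
and disjoint index sets `A, B`:
`E[(Σ_{i∈A} Σ_{j∈B} h⁰(Z_i,Z_j))²] = Σ_{i∈A} Σ_{j∈B} E[h⁰(Z_i,Z_j)²] ≤ 16·|A|·|B|`. -/
theorem statement12 {E Ω : Type*} [MeasurableSpace E] [MeasureSpace Ω]
    [IsProbabilityMeasure (ℙ : Measure Ω)]
    (P : Measure E) [IsProbabilityMeasure P]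
    (g : E → ℝ) (hg : Measurable g)
    (hatomless : ∀ c : ℝ, P {z | g z = c} = 0)
    (F : ℝ → ℝ) (hF : F = fun t => (P {z | g z ≤ t}).toReal)
    (h0 : E → E → ℝ)
    (hh0 : h0 = fun z z' =>
      (if g z < g z' then (1 : ℝ) else 0) - F (g z') + F (g z) - 1 / 2)
    (n : ℕ) (Z : Fin n → Ω → E)
    (hZmeas : ∀ t, Measurable (Z t))
    (hindep : iIndepFun Z ℙ)
    (hlaw : ∀ t, Measure.map (Z t) ℙ = P)
    (A B : Finset (Fin n)) (hAB : Disjoint A B) :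
    (∫ ω, (∑ i ∈ A, ∑ j ∈ B, h0 (Z i ω) (Z j ω)) ^ 2) =
        (∑ i ∈ A, ∑ j ∈ B, ∫ ω, (h0 (Z i ω) (Z j ω)) ^ 2) ∧
      (∫ ω, (∑ i ∈ A, ∑ j ∈ B, h0 (Z i ω) (Z j ω)) ^ 2) ≤
        16 * (A.card : ℝ) * (B.card : ℝ) := by
  classical
  -- basic facts about F and h0
  haveI : IsProbabilityMeasure (P.map g) := Measure.isProbabilityMeasure_map hg.aemeasurable
  have hμatom : ∀ c : ℝ, (P.map g) {c} = 0 := by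
    intro c
    rw [Measure.map_apply hg (measurableSet_singleton c)]
    exact hatomless c
  have hhalf : ∫ z, F (g z) ∂P = 1/2 :=
    int_cdf_half P g hg hatomless F hF (half_lintegral (P.map g) hμatom)
  have hkmeas : Measurable (fun p : E × E => h0 p.1 p.2) := k_meas P g hg F hF h0 hh0
  have hkabs : ∀ z z', |h0 z z'| ≤ 4 := k_abs P g F hF h0 hh0
  have hintR : ∀ z, ∫ z', h0 z z' ∂P = 0 := int_right P g hg F hF h0 hh0 hatomless hhalf
  have hintL : ∀ z', ∫ z, h0 z z' ∂P = 0 := int_left P g hg F hF h0 hh0 hatomless hhalf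
  -- measurability and integrability of the composed random variables
  have hWmeas : ∀ i j : Fin n, Measurable (fun ω => h0 (Z i ω) (Z j ω)) := fun i j =>
    hkmeas.comp ((hZmeas i).prodMk (hZmeas j))
  have hWWint : ∀ i j i' j' : Fin n,
      Integrable (fun ω => h0 (Z i ω) (Z j ω) * h0 (Z i' ω) (Z j' ω)) ℙ := by
    intro i j i' j'
    refine integrable_of_bdd ((hWmeas i j).mul (hWmeas i' j')) 16 ?_
    intro ω
    rw [abs_mul]
    nlinarith [hkabs (Z i ω) (Z j ω), hkabs (Z i' ω) (Z j' ω),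
      abs_nonneg (h0 (Z i ω) (Z j ω)), abs_nonneg (h0 (Z i' ω) (Z j' ω))]
  -- laws of pairs
  have law2 : ∀ i j : Fin n, i ≠ j →
      Measure.map (fun ω => (Z i ω, Z j ω)) ℙ = P.prod P := by
    intro i j hij
    rw [(indepFun_iff_map_prod_eq_prod_map_map (hZmeas i).aemeasurable
      (hZmeas j).aemeasurable).mp (hindep.indepFun hij), hlaw i, hlaw j]
  -- expectation of the kernel over the product measure
  have hkprodint : Integrable (fun p : E × E => h0 p.1 p.2) (P.prod P) :=
    integrable_of_bdd hkmeas 4 (fun p => hkabs _ _)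
  have hEk : ∫ p : E × E, h0 p.1 p.2 ∂(P.prod P) = 0 := by
    rw [integral_prod _ hkprodint]
    simp_rw [hintR]
    simp
  -- second moment over the product measure
  have hk2meas : Measurable (fun p : E × E => (h0 p.1 p.2)^2) := hkmeas.pow_const 2
  have hk2int : Integrable (fun p : E × E => (h0 p.1 p.2)^2) (P.prod P) := by
    refine integrable_of_bdd hk2meas 16 ?_
    intro p
    rw [abs_of_nonneg (sq_nonneg _)]
    nlinarith [hkabs p.1 p.2, abs_nonneg (h0 p.1 p.2), sq_abs (h0 p.1 p.2)]
  have hEsq_le : ∀ i j : Fin n, i ≠ j → (∫ ω, (h0 (Z i ω) (Z j ω))^2) ≤ 16 := by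
    intro i j hij
    have hmap : ∫ p : E × E, (h0 p.1 p.2)^2 ∂(P.prod P)
        = ∫ ω, (h0 (Z i ω) (Z j ω))^2 ∂ℙ := by
      rw [← law2 i j hij]
      exact integral_map ((hZmeas i).prodMk (hZmeas j)).aemeasurable
        hk2meas.aestronglyMeasurable
    rw [← hmap]
    calc ∫ p : E × E, (h0 p.1 p.2)^2 ∂(P.prod P)
        ≤ ∫ _p : E × E, (16:ℝ) ∂(P.prod P) := by
          refine integral_mono hk2int (integrable_const _) ?_
          intro p
          show (h0 p.1 p.2)^2 ≤ 16
          nlinarith [hkabs p.1 p.2, abs_nonneg (h0 p.1 p.2), sq_abs (h0 p.1 p.2)]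
      _ = 16 := by simp
  -- cross terms vanish: shared second index
  have cross1 : ∀ i i' j : Fin n, i ≠ i' → i ≠ j → i' ≠ j →
      (∫ ω, h0 (Z i ω) (Z j ω) * h0 (Z i' ω) (Z j ω)) = 0 := by
    intro i i' j hii' hij hi'j
    have hpairmeas : Measurable (fun ω => (Z i ω, Z i' ω)) := (hZmeas i).prodMk (hZmeas i')
    have hIndep : IndepFun (Z j) (fun ω => (Z i ω, Z i' ω)) ℙ :=
      (hindep.indepFun_prodMk hZmeas i i' j hij hi'j).symm
    have law3 : Measure.map (fun ω => (Z j ω, (Z i ω, Z i' ω))) ℙ = P.prod (P.prod P) := by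
      rw [(indepFun_iff_map_prod_eq_prod_map_map (hZmeas j).aemeasurable
        hpairmeas.aemeasurable).mp hIndep, hlaw j, law2 i i' hii']
    have hfmeas : Measurable (fun q : E × (E × E) => h0 q.2.1 q.1 * h0 q.2.2 q.1) :=
      (hkmeas.comp ((measurable_fst.comp measurable_snd).prodMk measurable_fst)).mul
        (hkmeas.comp ((measurable_snd.comp measurable_snd).prodMk measurable_fst))
    have hfint : Integrable (fun q : E × (E × E) => h0 q.2.1 q.1 * h0 q.2.2 q.1)
        (P.prod (P.prod P)) := by
      refine integrable_of_bdd hfmeas 16 ?_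
      intro q
      rw [abs_mul]
      nlinarith [hkabs q.2.1 q.1, hkabs q.2.2 q.1,
        abs_nonneg (h0 q.2.1 q.1), abs_nonneg (h0 q.2.2 q.1)]
    have hmap : ∫ q : E × (E × E), h0 q.2.1 q.1 * h0 q.2.2 q.1 ∂(P.prod (P.prod P))
        = ∫ ω, h0 (Z i ω) (Z j ω) * h0 (Z i' ω) (Z j ω) ∂ℙ := by
      rw [← law3]
      exact integral_map ((hZmeas j).prodMk hpairmeas).aemeasurable
        hfmeas.aestronglyMeasurable
    rw [← hmap, integral_prod _ hfint]
    have hinner : ∀ c : E, (∫ p : E × E, h0 p.1 c * h0 p.2 c ∂(P.prod P)) = 0 := by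
      intro c
      rw [integral_prod_mul (f := fun a => h0 a c) (g := fun b => h0 b c), hintL c]
      ring
    simp_rw [hinner]
    simp
  -- cross terms vanish: shared first index
  have cross2 : ∀ i j j' : Fin n, j ≠ j' → i ≠ j → i ≠ j' →
      (∫ ω, h0 (Z i ω) (Z j ω) * h0 (Z i ω) (Z j' ω)) = 0 := by
    intro i j j' hjj' hij hij'
    have hpairmeas : Measurable (fun ω => (Z j ω, Z j' ω)) := (hZmeas j).prodMk (hZmeas j')
    have hIndep : IndepFun (Z i) (fun ω => (Z j ω, Z j' ω)) ℙ :=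
      (hindep.indepFun_prodMk hZmeas j j' i hij.symm hij'.symm).symm
    have law3 : Measure.map (fun ω => (Z i ω, (Z j ω, Z j' ω))) ℙ = P.prod (P.prod P) := by
      rw [(indepFun_iff_map_prod_eq_prod_map_map (hZmeas i).aemeasurable
        hpairmeas.aemeasurable).mp hIndep, hlaw i, law2 j j' hjj']
    have hfmeas : Measurable (fun q : E × (E × E) => h0 q.1 q.2.1 * h0 q.1 q.2.2) :=
      (hkmeas.comp (measurable_fst.prodMk (measurable_fst.comp measurable_snd))).mul
        (hkmeas.comp (measurable_fst.prodMk (measurable_snd.comp measurable_snd)))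
    have hfint : Integrable (fun q : E × (E × E) => h0 q.1 q.2.1 * h0 q.1 q.2.2)
        (P.prod (P.prod P)) := by
      refine integrable_of_bdd hfmeas 16 ?_
      intro q
      rw [abs_mul]
      nlinarith [hkabs q.1 q.2.1, hkabs q.1 q.2.2,
        abs_nonneg (h0 q.1 q.2.1), abs_nonneg (h0 q.1 q.2.2)]
    have hmap : ∫ q : E × (E × E), h0 q.1 q.2.1 * h0 q.1 q.2.2 ∂(P.prod (P.prod P))
        = ∫ ω, h0 (Z i ω) (Z j ω) * h0 (Z i ω) (Z j' ω) ∂ℙ := by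
      rw [← law3]
      exact integral_map ((hZmeas i).prodMk hpairmeas).aemeasurable
        hfmeas.aestronglyMeasurable
    rw [← hmap, integral_prod _ hfint]
    have hinner : ∀ c : E, (∫ p : E × E, h0 c p.1 * h0 c p.2 ∂(P.prod P)) = 0 := by
      intro c
      rw [integral_prod_mul (f := fun a => h0 c a) (g := fun b => h0 c b), hintR c]
      ring
    simp_rw [hinner]
    simp
  -- cross terms vanish: all four indices distinct
  have cross3 : ∀ i j i' j' : Fin n, i ≠ i' → i ≠ j' → j ≠ i' → j ≠ j' → i ≠ j → i' ≠ j' →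
      (∫ ω, h0 (Z i ω) (Z j ω) * h0 (Z i' ω) (Z j' ω)) = 0 := by
    intro i j i' j' hii' hij' hji' hjj' hij hi'j'
    have hp1 : Measurable (fun ω => (Z i ω, Z j ω)) := (hZmeas i).prodMk (hZmeas j)
    have hp2 : Measurable (fun ω => (Z i' ω, Z j' ω)) := (hZmeas i').prodMk (hZmeas j')
    have hIndep : IndepFun (fun ω => (Z i ω, Z j ω)) (fun ω => (Z i' ω, Z j' ω)) ℙ :=
      hindep.indepFun_prodMk_prodMk hZmeas i j i' j' hii' hij' hji' hjj'
    have law4 : Measure.map (fun ω => ((Z i ω, Z j ω), (Z i' ω, Z j' ω))) ℙ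
        = (P.prod P).prod (P.prod P) := by
      rw [(indepFun_iff_map_prod_eq_prod_map_map hp1.aemeasurable hp2.aemeasurable).mp hIndep,
        law2 i j hij, law2 i' j' hi'j']
    have hfmeas : Measurable (fun q : (E × E) × (E × E) => h0 q.1.1 q.1.2 * h0 q.2.1 q.2.2) :=
      (hkmeas.comp measurable_fst).mul (hkmeas.comp measurable_snd)
    have hmap : ∫ q : (E × E) × (E × E), h0 q.1.1 q.1.2 * h0 q.2.1 q.2.2
          ∂((P.prod P).prod (P.prod P))
        = ∫ ω, h0 (Z i ω) (Z j ω) * h0 (Z i' ω) (Z j' ω) ∂ℙ := by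
      rw [← law4]
      exact integral_map (hp1.prodMk hp2).aemeasurable hfmeas.aestronglyMeasurable
    rw [← hmap,
      integral_prod_mul (f := fun p : E × E => h0 p.1 p.2) (g := fun p : E × E => h0 p.1 p.2),
      hEk]
    ring
  -- cross terms vanish: combined statement
  have cross : ∀ p q : Fin n × Fin n, p ∈ A ×ˢ B → q ∈ A ×ˢ B → p ≠ q →
      (∫ ω, h0 (Z p.1 ω) (Z p.2 ω) * h0 (Z q.1 ω) (Z q.2 ω)) = 0 := by
    rintro ⟨i, j⟩ ⟨i', j'⟩ hp hq hpq
    rw [Finset.mem_product] at hp hq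
    have dAB : ∀ {a b : Fin n}, a ∈ A → b ∈ B → a ≠ b :=
      fun {a b} ha hb h => (Finset.disjoint_left.mp hAB ha) (h ▸ hb)
    have hij : i ≠ j := dAB hp.1 hp.2
    have hi'j' : i' ≠ j' := dAB hq.1 hq.2
    have hij' : i ≠ j' := dAB hp.1 hq.2
    have hi'j : i' ≠ j := dAB hq.1 hp.2
    by_cases h1 : i = i'
    · subst h1
      have h2 : j ≠ j' := fun h => hpq (by rw [h])
      exact cross2 i j j' h2 hij hij'
    · by_cases h2 : j = j'
      · subst h2
        exact cross1 i i' j h1 hij hi'j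
      · exact cross3 i j i' j' h1 hij' hi'j.symm h2 hij hi'j'
  -- diagonal indices are distinct
  have hdiag_ne : ∀ p : Fin n × Fin n, p ∈ A ×ˢ B → p.1 ≠ p.2 := by
    intro p hp
    rw [Finset.mem_product] at hp
    exact fun h => (Finset.disjoint_left.mp hAB hp.1) (h ▸ hp.2)
  -- main computation
  have main : (∫ ω, (∑ p ∈ A ×ˢ B, h0 (Z p.1 ω) (Z p.2 ω)) ^ 2)
      = ∑ p ∈ A ×ˢ B, ∫ ω, (h0 (Z p.1 ω) (Z p.2 ω)) ^ 2 := by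
    have hexp : ∀ ω : Ω, (∑ p ∈ A ×ˢ B, h0 (Z p.1 ω) (Z p.2 ω)) ^ 2
        = ∑ p ∈ A ×ˢ B, ∑ q ∈ A ×ˢ B,
            h0 (Z p.1 ω) (Z p.2 ω) * h0 (Z q.1 ω) (Z q.2 ω) := by
      intro ω
      rw [sq, Finset.sum_mul_sum]
    simp_rw [hexp]
    rw [integral_finset_sum _ (fun p _ =>
      integrable_finset_sum _ (fun q _ => hWWint p.1 p.2 q.1 q.2))]
    refine Finset.sum_congr rfl ?_
    intro p hp
    rw [integral_finset_sum _ (fun q _ => hWWint p.1 p.2 q.1 q.2)]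
    rw [Finset.sum_eq_single_of_mem p hp (fun q hq hqp => cross p q hp hq (Ne.symm hqp))]
    congr 1
    ext ω
    rw [sq]
  have hsum_eq : (∑ i ∈ A, ∑ j ∈ B, ∫ ω, (h0 (Z i ω) (Z j ω)) ^ 2)
      = ∑ p ∈ A ×ˢ B, ∫ ω, (h0 (Z p.1 ω) (Z p.2 ω)) ^ 2 := by
    rw [Finset.sum_product]
  have hLHS : (∫ ω, (∑ i ∈ A, ∑ j ∈ B, h0 (Z i ω) (Z j ω)) ^ 2)
      = ∫ ω, (∑ p ∈ A ×ˢ B, h0 (Z p.1 ω) (Z p.2 ω)) ^ 2 := by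
    congr 1
    ext ω
    rw [Finset.sum_product]
  constructor
  · rw [hLHS, main, hsum_eq]
  · rw [hLHS, main]
    calc (∑ p ∈ A ×ˢ B, ∫ ω, (h0 (Z p.1 ω) (Z p.2 ω)) ^ 2)
        ≤ ∑ _p ∈ A ×ˢ B, (16:ℝ) :=
          Finset.sum_le_sum (fun p hp => hEsq_le p.1 p.2 (hdiag_ne p hp))
      _ = 16 * (A.card : ℝ) * (B.card : ℝ) := by
          rw [Finset.sum_const, Finset.card_product]
          push_cast
          ring
end

section
/- Fix ε ∈ (0, 1/2), η ∈ (0, 1/2 − ε), and τ ∈ [ε + η, 1 − ε − η]. For each T, let P_{X,T} and P_{Y,T} be probability measures on a measurable space (E, ℰ) with P_{Y,T} ≪ P_{X,T} and L_T := dP_{Y,T}/dP_{X,T}; let θ̂_T : E → ℝ be measurable with θ̂_T(Z) having an atomless distribution both under P_{X,T} and under P_{Y,T}; and let Z_1, …, Z_T be independent with Z_t ~ P_{X,T} for t ≤ t_0 := ⌊τT⌋ and Z_t ~ P_{Y,T} for t > t_0. Set m := ⌊Tε⌋, I_cp := { ⌊Tr⌋ : r ∈ [ε+η, 1−ε−η]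 }, and Ψ̂(k) := ((k−m)(T−m−k))^{−1} Σ_{i=m+1}^{k} Σ_{j=k+1}^{T−m} 1{ θ̂_T(Z_i) < θ̂_T(Z_j) }. Define δ_T := E| L_T(Z) − L_T(Z') | for independent Z, Z' ~ P_{X,T}, μ_T := 1/2 + δ_T/4, and μ_{*,T} := P( θ̂_T(Z_X) < θ̂_T(Z_Y) ) for independent Z_X ~ P_{X,T}, Z_Y ~ P_{Y,T}. Suppose there are positive reals c_T with √T · c_T → ∞, c_T < δ_T/4, and | μ_{*,T} − μ_T | ≤ δ_T/4 − c_T for all large T, and suppose √T · δ_T → ∞. Then sup_{k ∈ I_cp} √T · ( Ψ̂(k) − 1/2 ) → ∞ in probability as T → ∞. -/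
open MeasureTheory ProbabilityTheory Filter

section Aux

variable {E : Type*} [MeasurableSpace E] {Ω : Type*} [MeasurableSpace Ω]

lemma aux_cheb (μ : Measure Ω) [IsProbabilityMeasure μ]
    (PXT PYT : Measure E) [IsProbabilityMeasure PXT] [IsProbabilityMeasure PYT]
    (θT : E → ℝ) (hθ : Measurable θT)
    (T mT t0T : ℕ) (Z : ℕ → Ω → E) (hZ : ∀ t, Measurable (Z t))
    (hindep : iIndepFun
      (fun t : Set.Icc 1 T => Z t.1) μ)
    (hlawX : ∀ t, 1 ≤ t → t ≤ t0T → Measure.map (Z t) μ = PXT)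
    (hlawY : ∀ t, t0T < t → t ≤ T → Measure.map (Z t) μ = PYT)
    (hmt : mT < t0T) (htT : t0T < T - mT)
    (μs : ℝ) (hμs : μs = ((PXT.prod PYT) {p : E × E | θT p.1 < θT p.2}).toReal)
    (a : ℝ) (ha : 0 < a) :
    μ {ω | a ≤ |(((t0T:ℝ) - mT) * ((T:ℝ) - mT - t0T))⁻¹ *
        (∑ i ∈ Finset.Ioc mT t0T, ∑ j ∈ Finset.Ioc t0T (T - mT),
          (if θT (Z i ω) < θT (Z j ω) then (1:ℝ) else 0)) - μs|}
      ≤ ENNReal.ofReal ((T:ℝ) /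
          (((t0T - mT : ℕ):ℝ) * (((T - mT) - t0T : ℕ):ℝ) * a^2)) := by
  classical
  set n1 : ℕ := t0T - mT with hn1def
  set n2 : ℕ := (T - mT) - t0T with hn2def
  have hmT_le_T : mT ≤ T := le_trans hmt.le (le_trans htT.le (Nat.sub_le T mT))
  have ht0_le : t0T ≤ T - mT := htT.le
  have ht0_le_T : t0T ≤ T := le_trans ht0_le (Nat.sub_le T mT)
  have hn1cast : (n1 : ℝ) = (t0T : ℝ) - mT := by
    simp [hn1def, Nat.cast_sub hmt.le]
  have hn2cast : (n2 : ℝ) = (T : ℝ) - mT - t0T := by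
    simp [hn2def, Nat.cast_sub ht0_le, Nat.cast_sub hmT_le_T]
  have hn1pos : 0 < n1 := Nat.sub_pos_of_lt hmt
  have hn2pos : 0 < n2 := Nat.sub_pos_of_lt htT
  have hn1R : (0:ℝ) < n1 := by exact_mod_cast hn1pos
  have hn2R : (0:ℝ) < n2 := by exact_mod_cast hn2pos
  set s : Set (E × E) := {p : E × E | θT p.1 < θT p.2} with hsdef
  have hs : MeasurableSet s :=
    measurableSet_lt (hθ.comp measurable_fst) (hθ.comp measurable_snd)
  -- μs ∈ [0,1]
  have hμs0 : 0 ≤ μs := by rw [hμs]; exact ENNReal.toReal_nonneg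
  have hμs1 : μs ≤ 1 := by
    rw [hμs]
    have h1 : (PXT.prod PYT) s ≤ 1 := prob_le_one
    have := ENNReal.toReal_mono ENNReal.one_ne_top h1
    simpa using this
  -- the centered kernel
  set φ : E × E → ℝ := fun p => (if θT p.1 < θT p.2 then (1:ℝ) else 0) - μs with hφdef
  have hφmeas : Measurable φ := by
    refine Measurable.sub ?_ measurable_const
    exact Measurable.ite hs measurable_const measurable_const
  set g : ℕ → ℕ → Ω → ℝ := fun i j ω => φ (Z i ω, Z j ω) with hgdef
  have hgmeas : ∀ i j, Measurable (g i j) := fun i j =>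
    hφmeas.comp ((hZ i).prodMk (hZ j))
  have hφbd : ∀ p, |φ p| ≤ 1 := by
    intro p
    rw [hφdef]
    by_cases h : θT p.1 < θT p.2 <;> simp [h, abs_le] <;> constructor <;> linarith
  have hgbd : ∀ i j ω, |g i j ω| ≤ 1 := fun i j ω => hφbd _
  have hgint : ∀ i j, Integrable (g i j) μ := fun i j =>
    Integrable.mono' (integrable_const 1) (hgmeas i j).aestronglyMeasurable
      (Filter.Eventually.of_forall (hgbd i j))
  -- ∫ φ over PXT.prod PYT = 0
  have hφint : ∫ p, φ p ∂(PXT.prod PYT) = 0 := by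
    have hind : (fun p : E × E => (if θT p.1 < θT p.2 then (1:ℝ) else 0))
        = s.indicator (fun _ => (1:ℝ)) := by
      funext p
      simp [Set.indicator_apply, hsdef, Set.mem_setOf_eq]
    have h1 : ∫ p, (if θT p.1 < θT p.2 then (1:ℝ) else 0) ∂(PXT.prod PYT) = μs := by
      rw [hind, integral_indicator hs]
      simp [hμs, hsdef, measureReal_def]
    have hint1 : Integrable (fun p : E × E => (if θT p.1 < θT p.2 then (1:ℝ) else 0))
        (PXT.prod PYT) := by
      refine Integrable.mono' (integrable_const 1)
        ((Measurable.ite hs measurable_const measurable_const).aestronglyMeasurable) ?_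
      refine Filter.Eventually.of_forall fun p => ?_
      by_cases h : θT p.1 < θT p.2 <;> simp [h]
    rw [hφdef]
    rw [integral_sub hint1 (integrable_const μs), h1, integral_const]
    simp
  -- membership facts
  set A : Finset ℕ := Finset.Ioc mT t0T with hAdef
  set B : Finset ℕ := Finset.Ioc t0T (T - mT) with hBdef
  have hmemA : ∀ i ∈ A, 1 ≤ i ∧ i ≤ t0T := by
    intro i hi
    rw [hAdef, Finset.mem_Ioc] at hi
    exact ⟨Nat.succ_le_of_lt (Nat.lt_of_le_of_lt (Nat.zero_le mT) hi.1), hi.2⟩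
  have hmemB : ∀ j ∈ B, t0T < j ∧ j ≤ T := by
    intro j hj
    rw [hBdef, Finset.mem_Ioc] at hj
    exact ⟨hj.1, le_trans hj.2 (Nat.sub_le T mT)⟩
  have hiccA : ∀ i ∈ A, i ∈ Set.Icc 1 T := by
    intro i hi
    obtain ⟨h1, h2⟩ := hmemA i hi
    exact ⟨h1, le_trans h2 ht0_le_T⟩
  have hiccB : ∀ j ∈ B, j ∈ Set.Icc 1 T := by
    intro j hj
    obtain ⟨h1, h2⟩ := hmemB j hj
    exact ⟨le_trans (Nat.succ_le_of_lt (Nat.lt_of_le_of_lt (Nat.zero_le t0T) h1)) (le_refl _), h2⟩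
  -- law of pairs
  have hpairlaw : ∀ i ∈ A, ∀ j ∈ B,
      Measure.map (fun ω => (Z i ω, Z j ω)) μ = PXT.prod PYT := by
    intro i hi j hj
    obtain ⟨hi1, hi2⟩ := hmemA i hi
    obtain ⟨hj1, hj2⟩ := hmemB j hj
    have hne : i ≠ j := by omega
    have hind : IndepFun (Z i) (Z j) μ := by
      have := hindep.indepFun (i := ⟨i, hiccA i hi⟩) (j := ⟨j, hiccB j hj⟩)
        (fun h => hne (congrArg Subtype.val h))
      exact this
    rw [(indepFun_iff_map_prod_eq_prod_map_map (hZ i).aemeasurable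
      (hZ j).aemeasurable).mp hind, hlawX i hi1 hi2, hlawY j hj1 hj2]
  -- F1 : expectation of centered kernel is 0
  have hEg : ∀ i ∈ A, ∀ j ∈ B, ∫ ω, g i j ω ∂μ = 0 := by
    intro i hi j hj
    have : ∫ ω, g i j ω ∂μ = ∫ p, φ p ∂(PXT.prod PYT) := by
      rw [← hpairlaw i hi j hj,
        integral_map ((hZ i).prodMk (hZ j)).aemeasurable hφmeas.aestronglyMeasurable]
    rw [this, hφint]
  -- F2 : products over disjoint index pairs vanish
  have hEgg : ∀ i ∈ A, ∀ i' ∈ A, ∀ j ∈ B, ∀ j' ∈ B, i ≠ i' → j ≠ j' →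
      ∫ ω, g i j ω * g i' j' ω ∂μ = 0 := by
    intro i hi i' hi' j hj j' hj' hii hjj
    obtain ⟨hi1, hi2⟩ := hmemA i hi
    obtain ⟨hi'1, hi'2⟩ := hmemA i' hi'
    obtain ⟨hj1, hj2⟩ := hmemB j hj
    obtain ⟨hj'1, hj'2⟩ := hmemB j' hj'
    have hij' : i ≠ j' := by omega
    have hji' : j ≠ i' := by omega
    have hpair : IndepFun (fun ω => (Z i ω, Z j ω)) (fun ω => (Z i' ω, Z j' ω)) μ := by
      have := hindep.indepFun_prodMk_prodMk (fun t => hZ t.1)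
        ⟨i, hiccA i hi⟩ ⟨j, hiccB j hj⟩ ⟨i', hiccA i' hi'⟩ ⟨j', hiccB j' hj'⟩
        (fun h => hii (congrArg Subtype.val h)) (fun h => hij' (congrArg Subtype.val h))
        (fun h => hji' (congrArg Subtype.val h)) (fun h => hjj (congrArg Subtype.val h))
      exact this
    have hcomp : IndepFun (g i j) (g i' j') μ := hpair.comp hφmeas hφmeas
    have := hcomp.integral_mul_eq_mul_integral (hgmeas i j).aestronglyMeasurable
      (hgmeas i' j').aestronglyMeasurable
    have heq : ∫ ω, g i j ω * g i' j' ω ∂μ = ∫ ω, (g i j * g i' j') ω ∂μ := rfl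
    rw [heq, this, hEg i hi j hj, zero_mul]
  -- second moment of the centered sum
  set P : Finset (ℕ × ℕ) := A ×ˢ B with hPdef
  have hAcard : A.card = n1 := by rw [hAdef, Nat.card_Ioc]
  have hBcard : B.card = n2 := by rw [hBdef, Nat.card_Ioc]
  set G : Ω → ℝ := fun ω => ∑ p ∈ P, g p.1 p.2 ω with hGdef
  have hGmeas : Measurable G := by
    apply Finset.measurable_sum
    intro p _; exact hgmeas p.1 p.2
  have hGbd : ∀ ω, |G ω| ≤ (n1 : ℝ) * n2 := by
    intro ω
    calc |G ω| ≤ ∑ p ∈ P, |g p.1 p.2 ω| := Finset.abs_sum_le_sum_abs _ _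
      _ ≤ ∑ _p ∈ P, (1:ℝ) := Finset.sum_le_sum fun p _ => hgbd p.1 p.2 ω
      _ = (n1 : ℝ) * n2 := by
          rw [Finset.sum_const, hPdef, Finset.card_product, hAcard, hBcard]
          push_cast; ring
  have hprodint : ∀ p q : ℕ × ℕ, Integrable (fun ω => g p.1 p.2 ω * g q.1 q.2 ω) μ := by
    intro p q
    refine Integrable.mono' (integrable_const 1)
      ((hgmeas p.1 p.2).mul (hgmeas q.1 q.2)).aestronglyMeasurable ?_
    refine Filter.Eventually.of_forall fun ω => ?_
    rw [Real.norm_eq_abs, abs_mul]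
    exact mul_le_one₀ (hgbd _ _ _) (abs_nonneg _) (hgbd _ _ _)
  have hterm : ∀ p ∈ P, ∀ q ∈ P, ∫ ω, g p.1 p.2 ω * g q.1 q.2 ω ∂μ ≤
      (if p.1 = q.1 ∨ p.2 = q.2 then (1:ℝ) else 0) := by
    intro p hp q hq
    rw [hPdef, Finset.mem_product] at hp hq
    by_cases hc : p.1 = q.1 ∨ p.2 = q.2
    · rw [if_pos hc]
      calc ∫ ω, g p.1 p.2 ω * g q.1 q.2 ω ∂μ ≤ ∫ _ω, (1:ℝ) ∂μ := by
            refine integral_mono (hprodint p q) (integrable_const 1) fun ω => ?_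
            refine le_of_abs_le ?_
            rw [abs_mul]
            exact mul_le_one₀ (hgbd _ _ _) (abs_nonneg _) (hgbd _ _ _)
        _ = 1 := by simp
    · push_neg at hc
      rw [if_neg (by push_neg; exact hc),
        hEgg p.1 hp.1 q.1 hq.1 p.2 hp.2 q.2 hq.2 hc.1 hc.2]
  have hG2 : ∫ ω, (G ω)^2 ∂μ ≤ (n1 : ℝ) * n2 * T := by
    have hGsq : (fun ω => (G ω)^2) =
        fun ω => ∑ p ∈ P, ∑ q ∈ P, g p.1 p.2 ω * g q.1 q.2 ω := by
      funext ω
      rw [sq, hGdef, Finset.sum_mul_sum]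
    rw [hGsq, integral_finset_sum P (fun p _ => integrable_finset_sum P (fun q _ => hprodint p q))]
    have hinner : ∀ p ∈ P, ∫ ω, ∑ q ∈ P, g p.1 p.2 ω * g q.1 q.2 ω ∂μ =
        ∑ q ∈ P, ∫ ω, g p.1 p.2 ω * g q.1 q.2 ω ∂μ := fun p _ =>
      integral_finset_sum P (fun q _ => hprodint p q)
    rw [Finset.sum_congr rfl hinner]
    have hcount : ∀ p ∈ P, ∑ q ∈ P, (if p.1 = q.1 ∨ p.2 = q.2 then (1:ℝ) else 0)
        ≤ (n2 : ℝ) + n1 := by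
      intro p _
      have hsplit : ∀ q : ℕ × ℕ, (if p.1 = q.1 ∨ p.2 = q.2 then (1:ℝ) else 0) ≤
          (if p.1 = q.1 then (1:ℝ) else 0) + (if p.2 = q.2 then (1:ℝ) else 0) := by
        intro q
        by_cases h1 : p.1 = q.1 <;> by_cases h2 : p.2 = q.2 <;> simp [h1, h2]
      calc ∑ q ∈ P, (if p.1 = q.1 ∨ p.2 = q.2 then (1:ℝ) else 0)
          ≤ ∑ q ∈ P, ((if p.1 = q.1 then (1:ℝ) else 0) + (if p.2 = q.2 then (1:ℝ) else 0)) :=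
            Finset.sum_le_sum fun q _ => hsplit q
        _ = (∑ q ∈ P, (if p.1 = q.1 then (1:ℝ) else 0)) +
            (∑ q ∈ P, (if p.2 = q.2 then (1:ℝ) else 0)) := Finset.sum_add_distrib
        _ ≤ (n2 : ℝ) + n1 := by
            have e1 : ∑ q ∈ P, (if p.1 = q.1 then (1:ℝ) else 0) ≤ (n2 : ℝ) := by
              rw [hPdef, Finset.sum_product]
              calc ∑ a ∈ A, ∑ b ∈ B, (if p.1 = a then (1:ℝ) else 0)
                  = ∑ a ∈ A, (if p.1 = a then (1:ℝ) else 0) * n2 := by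
                    refine Finset.sum_congr rfl fun a _ => ?_
                    rw [Finset.sum_const, hBcard, nsmul_eq_mul, mul_comm]
                _ ≤ ∑ a ∈ A, (if p.1 = a then (1:ℝ) else 0) * n2 := le_refl _
                _ = (if p.1 ∈ A then (1:ℝ) else 0) * n2 := by
                    rw [← Finset.sum_mul, Finset.sum_ite_eq]
                _ ≤ (n2 : ℝ) := by
                    by_cases h : p.1 ∈ A <;> simp [h, hn2R.le]
            have e2 : ∑ q ∈ P, (if p.2 = q.2 then (1:ℝ) else 0) ≤ (n1 : ℝ) := by
              rw [hPdef, Finset.sum_product]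
              calc ∑ a ∈ A, ∑ b ∈ B, (if p.2 = b then (1:ℝ) else 0)
                  ≤ ∑ _a ∈ A, (1:ℝ) := by
                    refine Finset.sum_le_sum fun a _ => ?_
                    rw [Finset.sum_ite_eq]
                    by_cases h : p.2 ∈ B <;> simp [h]
                _ = (n1 : ℝ) := by rw [Finset.sum_const, hAcard, nsmul_eq_mul, mul_one]
            linarith
    have hle1 : ∑ p ∈ P, ∑ q ∈ P, ∫ ω, g p.1 p.2 ω * g q.1 q.2 ω ∂μ ≤
        ∑ p ∈ P, ((n2 : ℝ) + n1) := by
      refine Finset.sum_le_sum fun p hp => ?_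
      exact le_trans (Finset.sum_le_sum (fun q hq => hterm p hp q hq)) (hcount p hp)
    refine le_trans hle1 ?_
    rw [Finset.sum_const, hPdef, Finset.card_product, hAcard, hBcard, nsmul_eq_mul]
    have hn12T : (n1 : ℝ) + n2 ≤ T := by
      have : n1 + n2 ≤ T := by omega
      exact_mod_cast this
    push_cast
    have hmm := mul_le_mul_of_nonneg_left (by linarith : (n2:ℝ) + n1 ≤ T)
      (by positivity : (0:ℝ) ≤ (n1:ℝ) * n2)
    linarith
  -- relate the statistic to G
  have hnn : ((n1 : ℝ) * n2) ≠ 0 := by positivity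
  have hrel : ∀ ω, (((t0T:ℝ) - mT) * ((T:ℝ) - mT - t0T))⁻¹ *
      (∑ i ∈ Finset.Ioc mT t0T, ∑ j ∈ Finset.Ioc t0T (T - mT),
        (if θT (Z i ω) < θT (Z j ω) then (1:ℝ) else 0)) - μs
      = ((n1 : ℝ) * n2)⁻¹ * G ω := by
    intro ω
    have hcoef : ((t0T:ℝ) - mT) * ((T:ℝ) - mT - t0T) = (n1 : ℝ) * n2 := by
      rw [hn1cast, hn2cast]
    have hGS : G ω = (∑ i ∈ Finset.Ioc mT t0T, ∑ j ∈ Finset.Ioc t0T (T - mT),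
        (if θT (Z i ω) < θT (Z j ω) then (1:ℝ) else 0)) - (n1 : ℝ) * n2 * μs := by
      have h1 : G ω = ∑ p ∈ P, ((if θT (Z p.1 ω) < θT (Z p.2 ω) then (1:ℝ) else 0) - μs) := rfl
      rw [h1, Finset.sum_sub_distrib, Finset.sum_const, hPdef, Finset.card_product,
        hAcard, hBcard, Finset.sum_product, nsmul_eq_mul]
      push_cast
      simp only [hAdef, hBdef]
    rw [hcoef, hGS]
    field_simp
  -- the event and Markov's inequality
  set f : Ω → ℝ := fun ω => (((n1 : ℝ) * n2)⁻¹ * G ω)^2 with hfdef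
  have hfnonneg : ∀ ω, 0 ≤ f ω := fun ω => sq_nonneg _
  have hfmeas : Measurable f := ((hGmeas.const_mul _).pow_const 2)
  have hfbd : ∀ ω, f ω ≤ 1 := by
    intro ω
    rw [hfdef]
    have h1 : |((n1 : ℝ) * n2)⁻¹ * G ω| ≤ 1 := by
      rw [abs_mul, abs_inv, abs_of_pos (by positivity : (0:ℝ) < (n1:ℝ) * n2)]
      rw [inv_mul_le_iff₀ (by positivity)]
      simpa using hGbd ω
    calc (((n1 : ℝ) * n2)⁻¹ * G ω)^2 = |((n1 : ℝ) * n2)⁻¹ * G ω|^2 := by rw [sq_abs]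
      _ ≤ 1^2 := by exact pow_le_pow_left₀ (abs_nonneg _) h1 2
      _ = 1 := one_pow 2
  have hfint : Integrable f μ :=
    Integrable.mono' (integrable_const 1) hfmeas.aestronglyMeasurable
      (Filter.Eventually.of_forall fun ω => by
        rw [Real.norm_eq_abs, abs_of_nonneg (hfnonneg ω)]; exact hfbd ω)
  have hfintval : ∫ ω, f ω ∂μ ≤ (T : ℝ) / ((n1 : ℝ) * n2) := by
    have h1 : ∫ ω, f ω ∂μ = (((n1 : ℝ) * n2)⁻¹)^2 * ∫ ω, (G ω)^2 ∂μ := by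
      rw [hfdef]
      simp_rw [mul_pow]
      rw [integral_const_mul]
    rw [h1]
    calc (((n1 : ℝ) * n2)⁻¹)^2 * ∫ ω, (G ω)^2 ∂μ
        ≤ (((n1 : ℝ) * n2)⁻¹)^2 * ((n1 : ℝ) * n2 * T) := by
          exact mul_le_mul_of_nonneg_left hG2 (by positivity)
      _ = (T : ℝ) / ((n1 : ℝ) * n2) := by field_simp
  have hsubset : {ω | a ≤ |(((t0T:ℝ) - mT) * ((T:ℝ) - mT - t0T))⁻¹ *
        (∑ i ∈ Finset.Ioc mT t0T, ∑ j ∈ Finset.Ioc t0T (T - mT),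
          (if θT (Z i ω) < θT (Z j ω) then (1:ℝ) else 0)) - μs|}
      ⊆ {ω | a^2 ≤ f ω} := by
    intro ω hω
    simp only [Set.mem_setOf_eq] at hω ⊢
    rw [hrel ω] at hω
    rw [hfdef]
    calc a^2 ≤ |((n1 : ℝ) * n2)⁻¹ * G ω|^2 := pow_le_pow_left₀ ha.le hω 2
      _ = (((n1 : ℝ) * n2)⁻¹ * G ω)^2 := sq_abs _
  have hmarkov := mul_meas_ge_le_integral_of_nonneg
    (Filter.Eventually.of_forall hfnonneg) hfint (a^2)
  have htoReal : (μ {ω | a^2 ≤ f ω}).toReal ≤ (T : ℝ) / ((n1 : ℝ) * n2 * a^2) := by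
    have ha2 : (0:ℝ) < a^2 := by positivity
    rw [div_mul_eq_div_div, le_div_iff₀ ha2]
    calc (μ {ω | a^2 ≤ f ω}).toReal * a^2 = a^2 * (μ {x | a^2 ≤ f x}).toReal := by ring
      _ ≤ ∫ ω, f ω ∂μ := hmarkov
      _ ≤ (T : ℝ) / ((n1 : ℝ) * n2) := hfintval
  calc μ {ω | a ≤ |(((t0T:ℝ) - mT) * ((T:ℝ) - mT - t0T))⁻¹ *
        (∑ i ∈ Finset.Ioc mT t0T, ∑ j ∈ Finset.Ioc t0T (T - mT),
          (if θT (Z i ω) < θT (Z j ω) then (1:ℝ) else 0)) - μs|}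
      ≤ μ {ω | a^2 ≤ f ω} := measure_mono hsubset
    _ ≤ ENNReal.ofReal ((T : ℝ) / ((n1 : ℝ) * n2 * a^2)) := by
        rw [ENNReal.le_ofReal_iff_toReal_le (measure_ne_top μ _)
          (by positivity)]
        exact htoReal

end Aux

set_option maxHeartbeats 1000000 in
/-- Theorem: consistency under the fixed alternative.
For each `T`, data `Z_1, …, Z_T` are independent with `Z_t ~ P_{X,T}` for
`t ≤ t_0 = ⌊τT⌋` and `Z_t ~ P_{Y,T}` afterwards; `Ψ̂(k)` is the AUC statistic of
the classifier score `θ̂_T`; `δ_T := E|L_T(Z) − L_T(Z')|`, `μ_T := 1/2 + δ_T/4`,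
`μ_{*,T} := P(θ̂_T(Z_X) < θ̂_T(Z_Y))`.  If there are `c_T > 0` with
`√T·c_T → ∞`, `c_T < δ_T/4` and `|μ_{*,T} − μ_T| ≤ δ_T/4 − c_T` for large `T`,
and `√T·δ_T → ∞`, then `sup_{k ∈ I_cp} √T·(Ψ̂(k) − 1/2) → ∞` in probability. -/
theorem statement14 {E : Type*} [MeasurableSpace E]
    (ε η τ : ℝ) (hε : ε ∈ Set.Ioo (0 : ℝ) (1 / 2))
    (hη : η ∈ Set.Ioo (0 : ℝ) (1 / 2 - ε))
    (hτ : τ ∈ Set.Icc (ε + η) (1 - ε - η))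
    (PX PY : ℕ → Measure E)
    (hPX : ∀ T, IsProbabilityMeasure (PX T)) (hPY : ∀ T, IsProbabilityMeasure (PY T))
    (hac : ∀ T, PY T ≪ PX T)
    (L : ℕ → E → ℝ) (hLdef : ∀ T, L T = fun z => ((PY T).rnDeriv (PX T) z).toReal)
    (θ : ℕ → E → ℝ) (hθmeas : ∀ T, Measurable (θ T))
    (hatomX : ∀ T (c : ℝ), PX T {z | θ T z = c} = 0)
    (hatomY : ∀ T (c : ℝ), PY T {z | θ T z = c} = 0)
    (t0 m : ℕ → ℕ) (ht0 : ∀ T, t0 T = ⌊τ * T⌋₊) (hm : ∀ T, m T = ⌊(T : ℝ) * ε⌋₊)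
    (Icp : ℕ → Set ℕ)
    (hIcp : ∀ T, Icp T =
      {k : ℕ | ∃ r ∈ Set.Icc (ε + η) (1 - ε - η), k = ⌊(T : ℝ) * r⌋₊})
    (Ω : ℕ → Type*) [mΩ : ∀ T, MeasurableSpace (Ω T)]
    (μ : (T : ℕ) → Measure (Ω T)) (hμ : ∀ T, IsProbabilityMeasure (μ T))
    (Z : (T : ℕ) → ℕ → Ω T → E) (hZmeas : ∀ T t, Measurable (Z T t))
    (hindep : ∀ T : ℕ,
      iIndepFun (fun t : Set.Icc 1 T => Z T t.1) (μ T))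
    (hlawX : ∀ T t, 1 ≤ t → t ≤ t0 T → Measure.map (Z T t) (μ T) = PX T)
    (hlawY : ∀ T t, t0 T < t → t ≤ T → Measure.map (Z T t) (μ T) = PY T)
    (Ψ : (T : ℕ) → ℕ → Ω T → ℝ)
    (hΨ : ∀ T k ω, Ψ T k ω =
      (((k : ℝ) - (m T : ℝ)) * ((T : ℝ) - (m T : ℝ) - (k : ℝ)))⁻¹ *
        ∑ i ∈ Finset.Ioc (m T) k, ∑ j ∈ Finset.Ioc k (T - m T),
          (if θ T (Z T i ω) < θ T (Z T j ω) then (1 : ℝ) else 0))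
    (δ μT μstar : ℕ → ℝ)
    (hδ : ∀ T, δ T = ∫ p, |L T p.1 - L T p.2| ∂((PX T).prod (PX T)))
    (hμT : ∀ T, μT T = 1 / 2 + δ T / 4)
    (hμstar : ∀ T, μstar T =
      (((PX T).prod (PY T)) {p : E × E | θ T p.1 < θ T p.2}).toReal)
    (c : ℕ → ℝ) (hcpos : ∀ T, 0 < c T)
    (hcinf : Tendsto (fun T : ℕ => Real.sqrt T * c T) atTop atTop)
    (hcbound : ∀ᶠ T in atTop,
      c T < δ T / 4 ∧ |μstar T - μT T| ≤ δ T / 4 - c T)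
    (hδinf : Tendsto (fun T : ℕ => Real.sqrt T * δ T) atTop atTop) :
    ∀ M : ℝ,
      Tendsto (fun T : ℕ =>
          μ T {ω | ∃ k ∈ Icp T, M < Real.sqrt T * (Ψ T k ω - 1 / 2)})
        atTop (nhds (1 : ENNReal)) := by
  intro M
  obtain ⟨hε0, hε2⟩ := hε
  obtain ⟨hη0, hη2⟩ := hη
  obtain ⟨hτ1, hτ2⟩ := hτ
  have hmem_t0 : ∀ T, t0 T ∈ Icp T := by
    intro T
    rw [hIcp]
    exact ⟨τ, ⟨hτ1, hτ2⟩, by rw [ht0, mul_comm]⟩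
  -- the "bad" event: the statistic at t0 fails to exceed the threshold
  set bad : (T : ℕ) → Set (Ω T) :=
    fun T => {ω | ¬ (M < Real.sqrt T * (Ψ T (t0 T) ω - 1 / 2))} with hbaddef
  -- lower bound for the target probability
  have hlower : ∀ T, 1 - μ T (bad T) ≤
      μ T {ω | ∃ k ∈ Icp T, M < Real.sqrt T * (Ψ T k ω - 1 / 2)} := by
    intro T
    haveI := hμ T
    rw [tsub_le_iff_right]
    have hcover : (Set.univ : Set (Ω T)) ⊆
        {ω | ∃ k ∈ Icp T, M < Real.sqrt T * (Ψ T k ω - 1 / 2)} ∪ bad T := by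
      intro ω _
      by_cases h : M < Real.sqrt T * (Ψ T (t0 T) ω - 1 / 2)
      · exact Or.inl ⟨t0 T, hmem_t0 T, h⟩
      · exact Or.inr h
    calc (1 : ENNReal) = μ T Set.univ := (measure_univ).symm
      _ ≤ μ T ({ω | ∃ k ∈ Icp T, M < Real.sqrt T * (Ψ T k ω - 1 / 2)} ∪ bad T) :=
          measure_mono hcover
      _ ≤ _ := measure_union_le _ _
  -- D T := sqrt T * c T - M tends to infinity
  set D : ℕ → ℝ := fun T => Real.sqrt T * c T - M with hDdef
  have hD : Tendsto D atTop atTop := tendsto_atTop_add_const_right atTop (-M) hcinf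
  have hD2 : Tendsto (fun T => (D T)^2) atTop atTop := by
    have := hD.atTop_mul_atTop₀ hD
    simpa [sq] using this
  have hBB0 : Tendsto (fun T => (4 / η^2) / (D T)^2) atTop (nhds 0) :=
    Tendsto.div_atTop tendsto_const_nhds hD2
  -- the key eventual bound on the bad event
  have hbadle : ∀ᶠ T in atTop, μ T (bad T) ≤ ENNReal.ofReal ((4 / η^2) / (D T)^2) := by
    have ev1 : ∀ᶠ T : ℕ in atTop, (2 : ℝ) / η + 2 ≤ (T : ℝ) := by
      have := tendsto_natCast_atTop_atTop (R := ℝ)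
      exact this.eventually_ge_atTop _
    have ev3 : ∀ᶠ T in atTop, 0 < D T := hD.eventually_gt_atTop 0
    have ev4 : ∀ᶠ T : ℕ in atTop, 1 ≤ T := eventually_ge_atTop 1
    filter_upwards [ev1, hcbound, ev3, ev4] with T hT1 hcb hDT hT4
    haveI := hμ T; haveI := hPX T; haveI := hPY T
    have hTR : (0:ℝ) < T := by
      have : (1:ℝ) ≤ T := by exact_mod_cast hT4
      linarith
    have hsqT : 0 < Real.sqrt T := Real.sqrt_pos.mpr hTR
    have hηT : (2:ℝ) ≤ η * T := by
      have h2 : (2:ℝ)/η ≤ T - 2 := by linarith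
      have := (div_le_iff₀ hη0).mp h2
      nlinarith
    -- floor bounds
    have hmle : (m T : ℝ) ≤ (T:ℝ) * ε := by
      rw [hm]
      exact Nat.floor_le (by positivity)
    have ht0le : (t0 T : ℝ) ≤ τ * T := by
      rw [ht0]
      exact Nat.floor_le (by nlinarith)
    have ht0ge : τ * T - 1 < (t0 T : ℝ) := by
      rw [ht0]
      exact Nat.sub_one_lt_floor _
    -- nat inequalities
    have htauT : (ε + η) * T ≤ τ * T := mul_le_mul_of_nonneg_right hτ1 hTR.le
    have htauT2 : τ * T ≤ (1 - ε - η) * T := mul_le_mul_of_nonneg_right hτ2 hTR.le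
    have hmt : m T < t0 T := by
      have : (m T : ℝ) < (t0 T : ℝ) := by nlinarith
      exact_mod_cast this
    have hmT : m T ≤ T := by
      have : (m T : ℝ) ≤ (T : ℝ) := by nlinarith
      exact_mod_cast this
    have htT : t0 T < T - m T := by
      have hr : (t0 T : ℝ) + (m T : ℝ) < (T : ℝ) := by nlinarith
      have : t0 T + m T < T := by exact_mod_cast hr
      omega
    -- a := c T - M / sqrt T
    obtain ⟨a, hadef⟩ : ∃ a : ℝ, a = c T - M / Real.sqrt T := ⟨_, rfl⟩
    have hDa : D T = Real.sqrt T * a := by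
      rw [hadef, hDdef, mul_sub, mul_div_cancel₀ _ hsqT.ne']
    have ha : 0 < a := by
      have h := hDT
      rw [hDa] at h
      nlinarith
    -- apply the Chebyshev bound
    have hcheb := aux_cheb (μ T) (PX T) (PY T) (θ T) (hθmeas T) T (m T) (t0 T)
      (Z T) (hZmeas T) (hindep T) (hlawX T) (hlawY T) hmt htT (μstar T) (hμstar T) a ha
    -- bad T is contained in the Chebyshev event
    have hμsge : 1/2 + c T ≤ μstar T := by
      have h1 := (abs_le.mp hcb.2).1
      have h2 := hμT T
      linarith
    have hsubset : bad T ⊆ {ω | a ≤ |(((t0 T:ℝ) - (m T)) * ((T:ℝ) - (m T) - (t0 T)))⁻¹ *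
        (∑ i ∈ Finset.Ioc (m T) (t0 T), ∑ j ∈ Finset.Ioc (t0 T) (T - m T),
          (if θ T (Z T i ω) < θ T (Z T j ω) then (1:ℝ) else 0)) - μstar T|} := by
      intro ω hω
      simp only [hbaddef, Set.mem_setOf_eq, not_lt] at hω
      simp only [Set.mem_setOf_eq]
      rw [hΨ T (t0 T) ω] at hω
      obtain ⟨X, hXg⟩ : ∃ X : ℝ, (((t0 T:ℝ) - (m T)) * ((T:ℝ) - (m T) - (t0 T)))⁻¹ *
        (∑ i ∈ Finset.Ioc (m T) (t0 T), ∑ j ∈ Finset.Ioc (t0 T) (T - m T),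
          (if θ T (Z T i ω) < θ T (Z T j ω) then (1:ℝ) else 0)) = X := ⟨_, rfl⟩
      rw [hXg] at hω ⊢
      clear hXg
      have hX12 : X - 1/2 ≤ M / Real.sqrt T := by
        rw [le_div_iff₀ hsqT]
        calc (X - 1/2) * Real.sqrt T = Real.sqrt T * (X - 1/2) := by ring
          _ ≤ M := hω
      refine le_abs.mpr (Or.inr ?_)
      have hMdiv : a = c T - M / Real.sqrt T := hadef
      linarith [hX12, hμsge, hMdiv]
    -- numeric comparison of the bounds
    set n1 : ℝ := ((t0 T - m T : ℕ) : ℝ) with hn1def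
    set n2 : ℝ := (((T - m T) - t0 T : ℕ) : ℝ) with hn2def
    have hn1c : n1 = (t0 T : ℝ) - (m T : ℝ) := by
      rw [hn1def, Nat.cast_sub hmt.le]
    have hn2c : n2 = (T : ℝ) - (m T : ℝ) - (t0 T : ℝ) := by
      rw [hn2def, Nat.cast_sub htT.le, Nat.cast_sub hmT]
    have hn1lb : η * T / 2 ≤ n1 := by rw [hn1c]; linarith
    have hn2lb : η * T / 2 ≤ n2 := by rw [hn2c]; linarith
    have hDsq : (D T)^2 = (T : ℝ) * a^2 := by
      rw [hDa, mul_pow, Real.sq_sqrt hTR.le]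
    have hfinal : (T : ℝ) / (n1 * n2 * a^2) ≤ (4 / η^2) / (D T)^2 := by
      have hA : (η * T / 2) * (η * T / 2) ≤ n1 * n2 :=
        mul_le_mul hn1lb hn2lb (by positivity) (le_trans (by positivity) hn1lb)
      have hB : (η * T / 2) * (η * T / 2) * a^2 ≤ n1 * n2 * a^2 :=
        mul_le_mul_of_nonneg_right hA (sq_nonneg a)
      have hC : η^2 * (T : ℝ) * (D T)^2 / 4 = (η * T / 2) * (η * T / 2) * a^2 := by
        rw [hDsq]; ring
      have hpos : 0 < η^2 * (T : ℝ) * (D T)^2 / 4 := by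
        have : 0 < (D T)^2 := by positivity
        positivity
      calc (T : ℝ) / (n1 * n2 * a^2) ≤ (T : ℝ) / (η^2 * (T : ℝ) * (D T)^2 / 4) := by
            refine div_le_div_of_nonneg_left hTR.le hpos ?_
            rw [hC]; exact hB
        _ = (4 / η^2) / (D T)^2 := by
            field_simp
    calc μ T (bad T)
        ≤ μ T {ω | a ≤ |(((t0 T:ℝ) - (m T)) * ((T:ℝ) - (m T) - (t0 T)))⁻¹ *
            (∑ i ∈ Finset.Ioc (m T) (t0 T), ∑ j ∈ Finset.Ioc (t0 T) (T - m T),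
              (if θ T (Z T i ω) < θ T (Z T j ω) then (1:ℝ) else 0)) - μstar T|} :=
          measure_mono hsubset
      _ ≤ ENNReal.ofReal ((T : ℝ) / (n1 * n2 * a^2)) := hcheb
      _ ≤ ENNReal.ofReal ((4 / η^2) / (D T)^2) := ENNReal.ofReal_le_ofReal hfinal
  -- conclude
  have hbad0 : Tendsto (fun T => μ T (bad T)) atTop (nhds 0) := by
    have h0 : Tendsto (fun T => ENNReal.ofReal ((4 / η^2) / (D T)^2)) atTop (nhds 0) := by
      have := ENNReal.tendsto_ofReal hBB0
      simpa using this
    exact tendsto_of_tendsto_of_tendsto_of_le_of_le' tendsto_const_nhds h0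
      (Filter.Eventually.of_forall fun T => zero_le) hbadle
  have h1 : Tendsto (fun T => 1 - μ T (bad T)) atTop (nhds 1) := by
    have := ENNReal.Tendsto.sub
      (tendsto_const_nhds : Tendsto (fun _ : ℕ => (1:ENNReal)) atTop (nhds 1)) hbad0
      (Or.inl ENNReal.one_ne_top)
    simpa using this
  refine tendsto_of_tendsto_of_tendsto_of_le_of_le h1 tendsto_const_nhds hlower
    (fun T => ?_)
  haveI := hμ T
  exact prob_le_one
end
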